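/- The function f₂(x) = 1/(ψ(x+1) - ln(x)) - 2x tends to 1/3 as x → ∞. -/

import Mathlib

open Real Filter Topology Set

noncomputable def digamma (x : ℝ) : ℝ := deriv Real.Gamma x / Real.Gamma x

noncomputable def trigamma (x : ℝ) : ℝ := deriv digamma x

/-! ### Auxiliary lemmas -/

lemma aux_gamma_diff {x : ℝ} (hx : 0 < x) : DifferentiableAt ℝ Real.Gamma x := by
  apply Real.differentiableAt_Gamma
  intro m h
  have : (0:ℝ) ≤ (m : ℝ) := Nat.cast_nonneg m
  rw [h] at hx
  linarith

lemma aux_hasDerivAt_logGamma {x : ℝ} (hx : 0 < x) :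
    HasDerivAt (fun y => Real.log (Real.Gamma y)) (digamma x) x :=
  (aux_gamma_diff hx).hasDerivAt.log (Real.Gamma_pos_of_pos hx).ne'

lemma aux_digamma_add_one {x : ℝ} (hx : 0 < x) : digamma (x + 1) = digamma x + 1 / x := by
  have hd : DifferentiableAt ℝ Real.Gamma x := aux_gamma_diff hx
  have hd1 : DifferentiableAt ℝ Real.Gamma (x + 1) := aux_gamma_diff (by linarith)
  have h1 : HasDerivAt (fun y : ℝ => Real.Gamma (y + 1)) (deriv Real.Gamma (x + 1)) x := by
    have := hd1.hasDerivAt.comp x ((hasDerivAt_id x).add_const 1)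
    simpa [Function.comp_def] using this
  have h2 : HasDerivAt (fun y : ℝ => y * Real.Gamma y)
      (1 * Real.Gamma x + x * deriv Real.Gamma x) x :=
    (hasDerivAt_id x).mul hd.hasDerivAt
  have heq : (fun y : ℝ => y * Real.Gamma y) =ᶠ[𝓝 x] fun y => Real.Gamma (y + 1) := by
    filter_upwards [eventually_gt_nhds hx] with y hy
    exact (Real.Gamma_add_one hy.ne').symm
  have h3 := h2.congr_of_eventuallyEq heq.symm
  have hder : deriv Real.Gamma (x + 1) = Real.Gamma x + x * deriv Real.Gamma x := by
    have := h1.unique h3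
    linarith [this]
  have hΓ1 : Real.Gamma (x + 1) = x * Real.Gamma x := Real.Gamma_add_one hx.ne'
  have hΓpos := Real.Gamma_pos_of_pos hx
  unfold digamma
  rw [hder, hΓ1]
  field_simp
  ring

lemma aux_log_le_digamma {x : ℝ} (hx : 0 < x) : Real.log x ≤ digamma (x + 1) := by
  have h := Real.convexOn_log_Gamma.slope_le_of_hasDerivAt (x := x) (y := x + 1)
    (mem_Ioi.mpr hx) (mem_Ioi.mpr (by linarith)) (by linarith)
    (aux_hasDerivAt_logGamma (by linarith))
  rw [slope_def_field] at h
  have hΓ1 : Real.Gamma (x + 1) = x * Real.Gamma x := Real.Gamma_add_one hx.ne'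
  have hΓpos := Real.Gamma_pos_of_pos hx
  have : (Real.log ∘ Real.Gamma) (x + 1) - (Real.log ∘ Real.Gamma) x = Real.log x := by
    simp only [Function.comp_apply, hΓ1, Real.log_mul hx.ne' hΓpos.ne']
    ring
  rw [show x + 1 - x = 1 by ring] at h
  rw [this] at h
  simpa using h

lemma aux_digamma_le_log {x : ℝ} (hx : 0 < x) : digamma (x + 1) ≤ Real.log (x + 1) := by
  have h := Real.convexOn_log_Gamma.le_slope_of_hasDerivAt (x := x + 1) (y := x + 2)
    (mem_Ioi.mpr (by linarith)) (mem_Ioi.mpr (by linarith)) (by linarith)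
    (aux_hasDerivAt_logGamma (by linarith))
  rw [slope_def_field] at h
  have hx1 : (0:ℝ) < x + 1 := by linarith
  have hΓ1 : Real.Gamma (x + 2) = (x + 1) * Real.Gamma (x + 1) := by
    have := Real.Gamma_add_one (s := x + 1) hx1.ne'
    rw [show x + 1 + 1 = x + 2 by ring] at this
    exact this
  have hΓpos := Real.Gamma_pos_of_pos hx1
  have heq : (Real.log ∘ Real.Gamma) (x + 2) - (Real.log ∘ Real.Gamma) (x + 1)
      = Real.log (x + 1) := by
    simp only [Function.comp_apply, hΓ1, Real.log_mul hx1.ne' hΓpos.ne']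
    ring
  rw [show x + 2 - (x + 1) = 1 by ring, heq] at h
  simpa using h

/-! ### Elementary log bounds -/

lemma aux_log_le_cubic {u : ℝ} (hu : 0 ≤ u) :
    Real.log (1 + u) ≤ u - u ^ 2 / 2 + u ^ 3 / 3 := by
  set g : ℝ → ℝ := fun w => w - w ^ 2 / 2 + w ^ 3 / 3 - Real.log (1 + w) with hg
  have hderiv : ∀ v : ℝ, 0 < 1 + v →
      HasDerivAt g (1 - v + v ^ 2 - 1 / (1 + v)) v := by
    intro v hv
    have hlog : HasDerivAt (fun w : ℝ => Real.log (1 + w)) (1 / (1 + v)) v := by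
      have h0 := (Real.hasDerivAt_log hv.ne').comp v ((hasDerivAt_id v).const_add 1)
      simpa [one_div, Function.comp_def] using h0
    have hp : HasDerivAt (fun w : ℝ => w - w ^ 2 / 2 + w ^ 3 / 3) (1 - v + v ^ 2) v := by
      have := ((hasDerivAt_id v).sub ((hasDerivAt_pow 2 v).div_const 2)).add
        ((hasDerivAt_pow 3 v).div_const 3)
      refine this.congr_deriv ?_
      norm_num
    exact hp.sub hlog
  have hmono : MonotoneOn g (Ici 0) := by
    apply monotoneOn_of_deriv_nonneg (convex_Ici 0)
    · intro v hv
      have hv' : (0:ℝ) < 1 + v := by simp at hv; linarith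
      exact (hderiv v hv').continuousAt.continuousWithinAt
    · intro v hv
      rw [interior_Ici] at hv
      have hv' : (0:ℝ) < 1 + v := by simp at hv; linarith
      exact (hderiv v hv').differentiableAt.differentiableWithinAt
    · intro v hv
      rw [interior_Ici] at hv
      have hv0 : (0:ℝ) < v := hv
      have hv' : (0:ℝ) < 1 + v := by linarith
      rw [(hderiv v hv').deriv]
      rw [sub_nonneg, div_le_iff₀ hv']
      nlinarith
  have h0 : g 0 ≤ g u := hmono (self_mem_Ici) (mem_Ici.mpr hu) hu
  have : g 0 = 0 := by simp [hg]
  rw [this] at h0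
  simp only [hg] at h0
  linarith

lemma aux_quartic_le_log {u : ℝ} (hu : 0 ≤ u) :
    u - u ^ 2 / 2 + u ^ 3 / 3 - u ^ 4 / 4 ≤ Real.log (1 + u) := by
  set g : ℝ → ℝ := fun w => Real.log (1 + w) - (w - w ^ 2 / 2 + w ^ 3 / 3 - w ^ 4 / 4) with hg
  have hderiv : ∀ v : ℝ, 0 < 1 + v →
      HasDerivAt g (1 / (1 + v) - (1 - v + v ^ 2 - v ^ 3)) v := by
    intro v hv
    have hlog : HasDerivAt (fun w : ℝ => Real.log (1 + w)) (1 / (1 + v)) v := by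
      have h0 := (Real.hasDerivAt_log hv.ne').comp v ((hasDerivAt_id v).const_add 1)
      simpa [one_div, Function.comp_def] using h0
    have hp : HasDerivAt (fun w : ℝ => w - w ^ 2 / 2 + w ^ 3 / 3 - w ^ 4 / 4)
        (1 - v + v ^ 2 - v ^ 3) v := by
      have := (((hasDerivAt_id v).sub ((hasDerivAt_pow 2 v).div_const 2)).add
        ((hasDerivAt_pow 3 v).div_const 3)).sub ((hasDerivAt_pow 4 v).div_const 4)
      refine this.congr_deriv ?_
      norm_num
    exact hlog.sub hp
  have hmono : MonotoneOn g (Ici 0) := by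
    apply monotoneOn_of_deriv_nonneg (convex_Ici 0)
    · intro v hv
      have hv' : (0:ℝ) < 1 + v := by simp at hv; linarith
      exact (hderiv v hv').continuousAt.continuousWithinAt
    · intro v hv
      rw [interior_Ici] at hv
      have hv' : (0:ℝ) < 1 + v := by simp at hv; linarith
      exact (hderiv v hv').differentiableAt.differentiableWithinAt
    · intro v hv
      rw [interior_Ici] at hv
      have hv0 : (0:ℝ) < v := hv
      have hv' : (0:ℝ) < 1 + v := by linarith
      rw [(hderiv v hv').deriv]
      rw [sub_nonneg, le_div_iff₀ hv']
      nlinarith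
  have h0 : g 0 ≤ g u := hmono (self_mem_Ici) (mem_Ici.mpr hu) hu
  have : g 0 = 0 := by simp [hg]
  rw [this] at h0
  simp only [hg] at h0
  linarith

/-! ### The function d(x) = ψ(x+1) - log x and its telescoping -/

noncomputable def dgA (x : ℝ) : ℝ := digamma (x + 1) - Real.log x

lemma aux_dg_nonneg {x : ℝ} (hx : 0 < x) : 0 ≤ dgA x :=
  sub_nonneg.mpr (aux_log_le_digamma hx)

lemma aux_dg_le {x : ℝ} (hx : 0 < x) : dgA x ≤ 1 / x := by
  have h1 : dgA x ≤ Real.log (x + 1) - Real.log x :=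
    sub_le_sub_right (aux_digamma_le_log hx) _
  have h2 : Real.log (x + 1) - Real.log x = Real.log (1 + 1 / x) := by
    rw [← Real.log_div (by linarith) hx.ne']
    congr 1
    field_simp
  have h3 : Real.log (1 + 1 / x) ≤ 1 / x := by
    have := Real.log_le_sub_one_of_pos (show (0:ℝ) < 1 + 1 / x by positivity)
    linarith
  linarith

lemma aux_dg_step {x : ℝ} (hx : 0 < x) :
    dgA x - dgA (x + 1) = Real.log (1 + 1 / x) - 1 / (x + 1) := by
  have hrec : digamma (x + 1 + 1) = digamma (x + 1) + 1 / (x + 1) :=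
    aux_digamma_add_one (by linarith)
  have h2 : Real.log (x + 1) - Real.log x = Real.log (1 + 1 / x) := by
    rw [← Real.log_div (by linarith) hx.ne']
    congr 1
    field_simp
  unfold dgA
  rw [hrec]
  linarith

lemma aux_dg_sum {x : ℝ} (hx : 0 < x) (n : ℕ) :
    dgA x - dgA (x + n) = ∑ k ∈ Finset.range n,
      (Real.log (1 + 1 / (x + k)) - 1 / (x + k + 1)) := by
  induction n with
  | zero => simp
  | succ n ih =>
    rw [Finset.sum_range_succ, ← ih]
    have hstep := aux_dg_step (x := x + n) (by positivity)
    push_cast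
    rw [show x + (n + 1 : ℝ) = x + n + 1 by ring]
    linarith

/-! ### Termwise rational bounds -/

noncomputable def UA (t : ℝ) : ℝ :=
  1 / (2 * t) - 1 / (12 * t * (t + 1)) + 4 / (3 * t * (t + 1) * (t + 2))

noncomputable def LA (t : ℝ) : ℝ :=
  1 / (2 * t) - 1 / (12 * t * (t + 1)) - 4 / (3 * t * (t + 1) * (t + 2))

lemma aux_term_upper {t : ℝ} (ht : 1 ≤ t) :
    Real.log (1 + 1 / t) - 1 / (t + 1) ≤ UA t - UA (t + 1) := by
  have ht0 : (0:ℝ) < t := by linarith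
  have hlog := aux_log_le_cubic (u := 1 / t) (by positivity)
  have key : UA t - UA (t + 1) -
      (1 / t - (1 / t) ^ 2 / 2 + (1 / t) ^ 3 / 3 - 1 / (t + 1)) =
      (16 + 104 * (t - 1) + 136 * (t - 1) ^ 2 + 48 * (t - 1) ^ 3) /
        (12 * t ^ 4 * (t + 1) * (t + 2) * (t + 3)) := by
    unfold UA
    have h1 : t + 1 ≠ 0 := by positivity
    have h2 : t + 2 ≠ 0 := by positivity
    have h3 : t + 3 ≠ 0 := by positivity
    field_simp
    ring
  have hnum : 0 ≤ (16 + 104 * (t - 1) + 136 * (t - 1) ^ 2 + 48 * (t - 1) ^ 3) /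
      (12 * t ^ 4 * (t + 1) * (t + 2) * (t + 3)) := by
    have h1 : (0:ℝ) ≤ t - 1 := by linarith
    apply div_nonneg (by positivity) (by positivity)
  linarith

lemma aux_term_lower {t : ℝ} (ht : 1 ≤ t) :
    LA t - LA (t + 1) ≤ Real.log (1 + 1 / t) - 1 / (t + 1) := by
  have ht0 : (0:ℝ) < t := by linarith
  have hlog := aux_quartic_le_log (u := 1 / t) (by positivity)
  have key : (1 / t - (1 / t) ^ 2 / 2 + (1 / t) ^ 3 / 3 - (1 / t) ^ 4 / 4 - 1 / (t + 1)) -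
      (LA t - LA (t + 1)) =
      (8 + 106 * (t - 1) + 125 * (t - 1) ^ 2 + 45 * (t - 1) ^ 3) /
        (12 * t ^ 4 * (t + 1) * (t + 2) * (t + 3)) := by
    unfold LA
    have h1 : t + 1 ≠ 0 := by positivity
    have h2 : t + 2 ≠ 0 := by positivity
    have h3 : t + 3 ≠ 0 := by positivity
    field_simp
    ring
  have hnum : 0 ≤ (8 + 106 * (t - 1) + 125 * (t - 1) ^ 2 + 45 * (t - 1) ^ 3) /
      (12 * t ^ 4 * (t + 1) * (t + 2) * (t + 3)) := by
    have h1 : (0:ℝ) ≤ t - 1 := by linarith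
    apply div_nonneg (by positivity) (by positivity)
  linarith

/-! ### Limits of auxiliary sequences -/

lemma aux_tendsto_add_nat (x : ℝ) : Tendsto (fun n : ℕ => x + (n : ℝ)) atTop atTop :=
  tendsto_atTop_add_const_left _ x tendsto_natCast_atTop_atTop

lemma aux_UA_tendsto : Tendsto UA atTop (𝓝 0) := by
  have h1 : Tendsto (fun t : ℝ => 1 / (2 * t)) atTop (𝓝 0) :=
    Tendsto.div_atTop tendsto_const_nhds (tendsto_id.const_mul_atTop two_pos)
  have h2 : Tendsto (fun t : ℝ => 1 / (12 * t * (t + 1))) atTop (𝓝 0) := by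
    apply Tendsto.div_atTop tendsto_const_nhds
    exact ((tendsto_id.const_mul_atTop (by norm_num : (0:ℝ) < 12)).atTop_mul_atTop₀
      (tendsto_atTop_add_const_right _ 1 tendsto_id))
  have h3 : Tendsto (fun t : ℝ => 4 / (3 * t * (t + 1) * (t + 2))) atTop (𝓝 0) := by
    apply Tendsto.div_atTop tendsto_const_nhds
    exact (((tendsto_id.const_mul_atTop (by norm_num : (0:ℝ) < 3)).atTop_mul_atTop₀
      (tendsto_atTop_add_const_right _ 1 tendsto_id)).atTop_mul_atTop₀
      (tendsto_atTop_add_const_right _ 2 tendsto_id))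
  show Tendsto (fun t : ℝ => 1 / (2 * t) - 1 / (12 * t * (t + 1))
      + 4 / (3 * t * (t + 1) * (t + 2))) atTop (𝓝 0)
  simpa only [sub_zero, add_zero] using (h1.sub h2).add h3

lemma aux_LA_tendsto : Tendsto LA atTop (𝓝 0) := by
  have h1 : Tendsto (fun t : ℝ => 1 / (2 * t)) atTop (𝓝 0) :=
    Tendsto.div_atTop tendsto_const_nhds (tendsto_id.const_mul_atTop two_pos)
  have h2 : Tendsto (fun t : ℝ => 1 / (12 * t * (t + 1))) atTop (𝓝 0) := by
    apply Tendsto.div_atTop tendsto_const_nhds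
    exact ((tendsto_id.const_mul_atTop (by norm_num : (0:ℝ) < 12)).atTop_mul_atTop₀
      (tendsto_atTop_add_const_right _ 1 tendsto_id))
  have h3 : Tendsto (fun t : ℝ => 4 / (3 * t * (t + 1) * (t + 2))) atTop (𝓝 0) := by
    apply Tendsto.div_atTop tendsto_const_nhds
    exact (((tendsto_id.const_mul_atTop (by norm_num : (0:ℝ) < 3)).atTop_mul_atTop₀
      (tendsto_atTop_add_const_right _ 1 tendsto_id)).atTop_mul_atTop₀
      (tendsto_atTop_add_const_right _ 2 tendsto_id))
  show Tendsto (fun t : ℝ => 1 / (2 * t) - 1 / (12 * t * (t + 1))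
      - 4 / (3 * t * (t + 1) * (t + 2))) atTop (𝓝 0)
  simpa only [sub_zero] using (h1.sub h2).sub h3

/-! ### The key sandwich for dgA -/

lemma aux_dg_tendsto_zero (x : ℝ) (hx : 0 < x) :
    Tendsto (fun n : ℕ => dgA (x + n)) atTop (𝓝 0) := by
  have hpos : ∀ n : ℕ, (0:ℝ) < x + n := fun n => by positivity
  apply tendsto_of_tendsto_of_tendsto_of_le_of_le (g := fun _ : ℕ => (0:ℝ))
      (h := fun n : ℕ => 1 / (x + n))
  · exact tendsto_const_nhds
  · exact Tendsto.div_atTop tendsto_const_nhds (aux_tendsto_add_nat x)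
  · exact fun n => aux_dg_nonneg (hpos n)
  · exact fun n => aux_dg_le (hpos n)

lemma aux_dg_bounds {x : ℝ} (hx : 1 ≤ x) : LA x ≤ dgA x ∧ dgA x ≤ UA x := by
  have hx0 : (0:ℝ) < x := by linarith
  have hS : Tendsto (fun n : ℕ => dgA x - dgA (x + n)) atTop (𝓝 (dgA x)) := by
    have := (tendsto_const_nhds (x := dgA x) (f := atTop (α := ℕ))).sub
      (aux_dg_tendsto_zero x hx0)
    simpa using this
  have hUA : Tendsto (fun n : ℕ => UA x - UA (x + n)) atTop (𝓝 (UA x)) := by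
    have h2 : Tendsto (fun n : ℕ => UA (x + n)) atTop (𝓝 0) :=
      aux_UA_tendsto.comp (aux_tendsto_add_nat x)
    have := (tendsto_const_nhds (x := UA x) (f := atTop (α := ℕ))).sub h2
    simpa using this
  have hLA : Tendsto (fun n : ℕ => LA x - LA (x + n)) atTop (𝓝 (LA x)) := by
    have h2 : Tendsto (fun n : ℕ => LA (x + n)) atTop (𝓝 0) :=
      aux_LA_tendsto.comp (aux_tendsto_add_nat x)
    have := (tendsto_const_nhds (x := LA x) (f := atTop (α := ℕ))).sub h2
    simpa using this
  have hUineq : ∀ n : ℕ, dgA x - dgA (x + n) ≤ UA x - UA (x + n) := by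
    intro n
    rw [aux_dg_sum hx0 n]
    have htel : UA x - UA (x + n) = ∑ k ∈ Finset.range n,
        (UA (x + k) - UA (x + k + 1)) := by
      have h := Finset.sum_range_sub' (f := fun k : ℕ => UA (x + (k:ℝ))) n
      push_cast at h
      simp only [← add_assoc] at h
      simpa using h.symm
    rw [htel]
    apply Finset.sum_le_sum
    intro k _
    exact aux_term_upper (by push_cast; linarith [Nat.cast_nonneg (α := ℝ) k])
  have hLineq : ∀ n : ℕ, LA x - LA (x + n) ≤ dgA x - dgA (x + n) := by
    intro n
    rw [aux_dg_sum hx0 n]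
    have htel : LA x - LA (x + n) = ∑ k ∈ Finset.range n,
        (LA (x + k) - LA (x + k + 1)) := by
      have h := Finset.sum_range_sub' (f := fun k : ℕ => LA (x + (k:ℝ))) n
      push_cast at h
      simp only [← add_assoc] at h
      simpa using h.symm
    rw [htel]
    apply Finset.sum_le_sum
    intro k _
    exact aux_term_lower (by push_cast; linarith [Nat.cast_nonneg (α := ℝ) k])
  constructor
  · exact le_of_tendsto_of_tendsto' hLA hS hLineq
  · exact le_of_tendsto_of_tendsto' hS hUA hUineq

/-! ### Positivity and closed forms of the bounds -/

lemma aux_LA_eq {x : ℝ} (hx : 1 ≤ x) :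
    LA x = (6 * x ^ 2 + 17 * x - 6) / (12 * x * (x + 1) * (x + 2)) := by
  have hx0 : (0:ℝ) < x := by linarith
  unfold LA
  have h1 : x + 1 ≠ 0 := by positivity
  have h2 : x + 2 ≠ 0 := by positivity
  field_simp
  ring

lemma aux_UA_eq {x : ℝ} (hx : 1 ≤ x) :
    UA x = (6 * x ^ 2 + 17 * x + 26) / (12 * x * (x + 1) * (x + 2)) := by
  have hx0 : (0:ℝ) < x := by linarith
  unfold UA
  have h1 : x + 1 ≠ 0 := by positivity
  have h2 : x + 2 ≠ 0 := by positivity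
  field_simp
  ring

lemma aux_LA_pos {x : ℝ} (hx : 1 ≤ x) : 0 < LA x := by
  rw [aux_LA_eq hx]
  have hx0 : (0:ℝ) < x := by linarith
  apply div_pos (by nlinarith) (by positivity)

/-! ### Limits of the two rational comparison functions -/

lemma aux_inv_tendsto : Tendsto (fun x : ℝ => 1 / x) atTop (𝓝 0) :=
  Tendsto.div_atTop tendsto_const_nhds tendsto_id

lemma aux_inv_sq_tendsto : Tendsto (fun x : ℝ => 1 / x ^ 2) atTop (𝓝 0) :=
  Tendsto.div_atTop tendsto_const_nhds (tendsto_pow_atTop two_ne_zero)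

lemma aux_one_div_UA {x : ℝ} (hx : 1 ≤ x) :
    1 / UA x - 2 * x = (2 * x ^ 2 - 28 * x) / (6 * x ^ 2 + 17 * x + 26) := by
  have hx0 : (0:ℝ) < x := by linarith
  have hd : (0:ℝ) < 6 * x ^ 2 + 17 * x + 26 := by nlinarith
  rw [aux_UA_eq hx, one_div_div]
  field_simp
  ring

lemma aux_one_div_LA {x : ℝ} (hx : 1 ≤ x) :
    1 / LA x - 2 * x = (2 * x ^ 2 + 36 * x) / (6 * x ^ 2 + 17 * x - 6) := by
  have hx0 : (0:ℝ) < x := by linarith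
  have hd : (0:ℝ) < 6 * x ^ 2 + 17 * x - 6 := by nlinarith
  rw [aux_LA_eq hx, one_div_div]
  rw [eq_div_iff hd.ne', sub_mul, div_mul_cancel₀ _ hd.ne']
  ring

lemma aux_ratU_tendsto :
    Tendsto (fun x : ℝ => (2 * x ^ 2 - 28 * x) / (6 * x ^ 2 + 17 * x + 26)) atTop (𝓝 (1/3)) := by
  have hnum : Tendsto (fun x : ℝ => 2 - 28 * (1 / x)) atTop (𝓝 2) := by
    have := tendsto_const_nhds (x := (2:ℝ)) (f := atTop (α := ℝ)) |>.sub
      (aux_inv_tendsto.const_mul 28)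
    simpa using this
  have hden : Tendsto (fun x : ℝ => 6 + 17 * (1 / x) + 26 * (1 / x ^ 2)) atTop (𝓝 6) := by
    have := (tendsto_const_nhds (x := (6:ℝ)) (f := atTop (α := ℝ)) |>.add
      (aux_inv_tendsto.const_mul 17)).add (aux_inv_sq_tendsto.const_mul 26)
    simpa using this
  have h := hnum.div hden (by norm_num)
  have h2 : (2:ℝ) / 6 = 1 / 3 := by norm_num
  rw [h2] at h
  apply h.congr'
  filter_upwards [eventually_ge_atTop (1:ℝ)] with x hx
  have hx0 : (0:ℝ) < x := by linarith
  have hd : (0:ℝ) < 6 * x ^ 2 + 17 * x + 26 := by nlinarith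
  have hd2 : (0:ℝ) < 6 + 17 * (1 / x) + 26 * (1 / x ^ 2) := by positivity
  simp only [Pi.div_apply]
  rw [div_eq_div_iff hd2.ne' hd.ne']
  field_simp

lemma aux_ratL_tendsto :
    Tendsto (fun x : ℝ => (2 * x ^ 2 + 36 * x) / (6 * x ^ 2 + 17 * x - 6)) atTop (𝓝 (1/3)) := by
  have hnum : Tendsto (fun x : ℝ => 2 + 36 * (1 / x)) atTop (𝓝 2) := by
    have := tendsto_const_nhds (x := (2:ℝ)) (f := atTop (α := ℝ)) |>.add
      (aux_inv_tendsto.const_mul 36)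
    simpa using this
  have hden : Tendsto (fun x : ℝ => 6 + 17 * (1 / x) - 6 * (1 / x ^ 2)) atTop (𝓝 6) := by
    have := (tendsto_const_nhds (x := (6:ℝ)) (f := atTop (α := ℝ)) |>.add
      (aux_inv_tendsto.const_mul 17)).sub (aux_inv_sq_tendsto.const_mul 6)
    simpa using this
  have h := hnum.div hden (by norm_num)
  have h2 : (2:ℝ) / 6 = 1 / 3 := by norm_num
  rw [h2] at h
  apply h.congr'
  filter_upwards [eventually_ge_atTop (1:ℝ)] with x hx
  have hx0 : (0:ℝ) < x := by linarith
  have hd : (0:ℝ) < 6 * x ^ 2 + 17 * x - 6 := by nlinarith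
  have hd2 : 6 + 17 * (1 / x) - 6 * (1 / x ^ 2) ≠ 0 := by
    have : (6:ℝ) + 17 * (1 / x) - 6 * (1 / x ^ 2) = (6 * x ^ 2 + 17 * x - 6) / x ^ 2 := by
      field_simp
    rw [this]
    positivity
  simp only [Pi.div_apply]
  rw [div_eq_div_iff hd2 hd.ne']
  field_simp

theorem f2_tendsto :
    Tendsto (fun x : ℝ => 1 / (digamma (x + 1) - Real.log x) - 2 * x) atTop (𝓝 (1/3)) := by
  apply tendsto_of_tendsto_of_tendsto_of_le_of_le' aux_ratU_tendsto aux_ratL_tendsto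
  · filter_upwards [eventually_ge_atTop (1:ℝ)] with x hx
    obtain ⟨hL, hU⟩ := aux_dg_bounds hx
    have hLpos := aux_LA_pos hx
    have hdpos : 0 < dgA x := lt_of_lt_of_le hLpos hL
    have h1 : 1 / UA x ≤ 1 / dgA x := one_div_le_one_div_of_le hdpos hU
    have h2 : 1 / UA x - 2 * x ≤ 1 / dgA x - 2 * x := by linarith
    rw [aux_one_div_UA hx] at h2
    exact h2
  · filter_upwards [eventually_ge_atTop (1:ℝ)] with x hx
    obtain ⟨hL, hU⟩ := aux_dg_bounds hx
    have hLpos := aux_LA_pos hx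
    have h1 : 1 / dgA x ≤ 1 / LA x := one_div_le_one_div_of_le hLpos hL
    have h2 : 1 / dgA x - 2 * x ≤ 1 / LA x - 2 * x := by linarith
    rw [aux_one_div_LA hx] at h2
    exact h2
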